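/- arXiv:2604.12550 — 2 statements merged into one kernel-verified Lean document; each statement's English description precedes it below -/
import Mathlib

section
/- For every finite quandle Q, the commutator subgroup of the enveloping group G(Q) is finite. -/
open scoped Quandles
/-- The inner automorphism group of a rack/quandle `Q`: the subgroup of permutations
of `Q` generated by the left translations `L_x = Rack.act' x`. -/
def QdlInn (Q : Type*) [Rack Q] : Subgroup (Equiv.Perm Q) :=
  Subgroup.closure (Set.range (Rack.act' (R := Q)))

/-- The quandle morphism `θ : Q → Conj (Inn Q)`, `x ↦ L_x`. -/
def QdlTheta (Q : Type*) [Rack Q] : ShelfHom Q (Quandle.Conj (QdlInn Q)) where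
  toFun x := ⟨Rack.act' x, Subgroup.subset_closure ⟨x, rfl⟩⟩
  map_act' := by
    intro x y
    simp only [Quandle.conj_act_eq_conj]
    exact Subtype.ext (Rack.ad_conj x y)

/-- The induced group morphism `θ_{G(Q)} : G(Q) → Inn(Q)`. -/
def QdlThetaG (Q : Type*) [Rack Q] : Rack.EnvelGroup Q →* QdlInn Q :=
  Rack.toEnvelGroup.map (QdlTheta Q)

/-- `Z₀`, the kernel of `θ_{G(Q)}`. -/
def QdlZ0 (Q : Type*) [Rack Q] : Subgroup (Rack.EnvelGroup Q) :=
  (QdlThetaG Q).ker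

section Reps

variable {Q : Type*} {V : Type*} [AddCommGroup V] [Module ℂ V]

/-- `ρ : Q → GL(V)` is a quandle (rack) representation: `ρ(x ◃ y) = ρ(x) ρ(y) ρ(x)⁻¹`. -/
def IsQdlRep [Shelf Q] (ρ : Q → (V →ₗ[ℂ] V)ˣ) : Prop :=
  ∀ x y : Q, ρ (x ◃ y) = ρ x * ρ y * (ρ x)⁻¹

/-- A family `ρ : Q → GL(V)` is irreducible if the only subspaces invariant
under all `ρ x` are `0` and `V`. -/
def QdlIrred (ρ : Q → (V →ₗ[ℂ] V)ˣ) : Prop :=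
  ∀ W : Submodule ℂ V, (∀ x : Q, ∀ v ∈ W, (ρ x : V →ₗ[ℂ] V) v ∈ W) → W = ⊥ ∨ W = ⊤

/-- A group representation `σ : G →* GL(V)` is irreducible if the only subspaces
invariant under all `σ g` are `0` and `V`. -/
def GrpIrred {G : Type*} [Group G] (σ : G →* (V →ₗ[ℂ] V)ˣ) : Prop :=
  ∀ W : Submodule ℂ V, (∀ g : G, ∀ v ∈ W, (σ g : V →ₗ[ℂ] V) v ∈ W) → W = ⊥ ∨ W = ⊤

end Reps

/-- A character of a quandle: a map `χ : Q → ℂˣ` with `χ(x ◃ y) = χ(y)`. -/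
def QdlChar {Q : Type*} [Shelf Q] (χ : Q → ℂˣ) : Prop :=
  ∀ x y : Q, χ (x ◃ y) = χ y


lemma envel_gen (Q : Type*) [Rack Q] :
    Subgroup.closure (Set.range (Rack.toEnvelGroup Q)) = (⊤ : Subgroup (Rack.EnvelGroup Q)) := by
  rw [eq_top_iff]
  intro g _
  induction g using Quotient.inductionOn with
  | h a =>
    induction a with
    | unit => exact one_mem _
    | incl x => exact Subgroup.subset_closure ⟨x, rfl⟩
    | mul a b iha ihb => exact mul_mem (iha trivial) (ihb trivial)
    | inv a iha => exact inv_mem (iha trivial)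

lemma theta_incl {Q : Type*} [Rack Q] (x : Q) :
    QdlThetaG Q (Rack.toEnvelGroup Q x) = QdlTheta Q x := rfl

lemma conj_incl {Q : Type*} [Rack Q] (g : Rack.EnvelGroup Q) (y : Q) :
    g * Rack.toEnvelGroup Q y * g⁻¹ =
      Rack.toEnvelGroup Q (((QdlThetaG Q g : QdlInn Q) : Equiv.Perm Q) y) := by
  have hg : g ∈ Subgroup.closure (Set.range (Rack.toEnvelGroup Q)) := by
    rw [envel_gen]; trivial
  induction hg using Subgroup.closure_induction generalizing y with
  | mem x hx =>
    obtain ⟨x, rfl⟩ := hx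
    have h1 : Rack.toEnvelGroup Q x * Rack.toEnvelGroup Q y * (Rack.toEnvelGroup Q x)⁻¹ =
        Rack.toEnvelGroup Q (x ◃ y) := ((Rack.toEnvelGroup Q).map_act' (x := x) (y := y)).symm
    rw [h1, theta_incl]
    rfl
  | one => simp
  | mul a b _ _ iha ihb =>
    have h2 : a * b * Rack.toEnvelGroup Q y * (a * b)⁻¹ =
        a * (b * Rack.toEnvelGroup Q y * b⁻¹) * a⁻¹ := by group
    rw [h2, ihb, iha, map_mul]
    rfl
  | inv a _ iha =>
    have hkey := iha (((QdlThetaG Q a⁻¹ : QdlInn Q) : Equiv.Perm Q) y)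
    have h3 : ((QdlThetaG Q a : QdlInn Q) : Equiv.Perm Q)
        (((QdlThetaG Q a⁻¹ : QdlInn Q) : Equiv.Perm Q) y) = y := by
      rw [map_inv]
      simp
    rw [h3] at hkey
    calc a⁻¹ * Rack.toEnvelGroup Q y * (a⁻¹)⁻¹
        = a⁻¹ * (a * Rack.toEnvelGroup Q
            (((QdlThetaG Q a⁻¹ : QdlInn Q) : Equiv.Perm Q) y) * a⁻¹) * a := by rw [← hkey]; group
    _ = _ := by group

lemma ker_central {Q : Type*} [Rack Q] : QdlZ0 Q ≤ Subgroup.center (Rack.EnvelGroup Q) := by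
  intro g hg
  rw [Subgroup.mem_center_iff]
  intro h
  have hh : h ∈ Subgroup.closure (Set.range (Rack.toEnvelGroup Q)) := by
    rw [envel_gen]; trivial
  induction hh using Subgroup.closure_induction with
  | mem x hx =>
    obtain ⟨y, rfl⟩ := hx
    have h1 := conj_incl g y
    rw [show QdlThetaG Q g = 1 from hg] at h1
    simp only [OneMemClass.coe_one, Equiv.Perm.coe_one, id_eq] at h1
    calc Rack.toEnvelGroup Q y * g = (g * Rack.toEnvelGroup Q y * g⁻¹) * g := by rw [h1]
    _ = g * Rack.toEnvelGroup Q y := by group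
  | one => simp
  | mul a b _ _ iha ihb => rw [mul_assoc, ihb, ← mul_assoc, iha, mul_assoc]
  | inv a _ iha =>
    calc a⁻¹ * g = a⁻¹ * (g * a) * a⁻¹ := by group
    _ = a⁻¹ * (a * g) * a⁻¹ := by rw [← iha]
    _ = g * a⁻¹ := by group

open scoped commutatorElement

lemma comm_well_def {Q : Type*} [Rack Q] (g h g' h' : Rack.EnvelGroup Q)
    (ha2 : ∀ x : Rack.EnvelGroup Q, x * (g⁻¹ * g') = (g⁻¹ * g') * x)
    (hb2 : ∀ x : Rack.EnvelGroup Q, x * (h⁻¹ * h') = (h⁻¹ * h') * x) :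
    ⁅g, h⁆ = ⁅g', h'⁆ := by
  set a := g⁻¹ * g' with hadef
  set b := h⁻¹ * h' with hbdef
  have hg' : g' = g * a := by rw [hadef]; group
  have hh' : h' = h * b := by rw [hbdef]; group
  have e1 : a * (h * b) * a⁻¹ = h * b := by rw [← ha2 (h * b)]; group
  have e2 : b * g⁻¹ * b⁻¹ = g⁻¹ := by rw [← hb2 g⁻¹]; group
  have h2 : ⁅g * a, h * b⁆ = ⁅g, h⁆ := by
    simp only [commutatorElement_def, mul_inv_rev]
    calc g * a * (h * b) * (a⁻¹ * g⁻¹) * (b⁻¹ * h⁻¹)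
        = g * (a * (h * b) * a⁻¹) * (g⁻¹ * (b⁻¹ * h⁻¹)) := by group
      _ = g * (h * b) * (g⁻¹ * (b⁻¹ * h⁻¹)) := by rw [e1]
      _ = g * h * (b * g⁻¹ * b⁻¹) * h⁻¹ := by group
      _ = g * h * g⁻¹ * h⁻¹ := by rw [e2]
  rw [hg', hh', h2]

/-- for a finite quandle `Q`, the commutator subgroup of `G(Q)` is finite. -/
theorem stmt13 (Q : Type*) [Quandle Q] [Finite Q] :
    Finite (commutator (Rack.EnvelGroup Q)) := by
  have hK : Finite (Rack.EnvelGroup Q ⧸ QdlZ0 Q) :=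
    Finite.of_injective _ (QuotientGroup.kerLift_injective (QdlThetaG Q))
  let c : Rack.EnvelGroup Q ⧸ QdlZ0 Q → Rack.EnvelGroup Q ⧸ QdlZ0 Q → Rack.EnvelGroup Q :=
    fun x y => Quotient.liftOn₂' x y (fun g h => ⁅g, h⁆) (by
      intro g h g' h' hgg hhh
      rw [QuotientGroup.leftRel_apply] at hgg hhh
      refine comm_well_def g h g' h' ?_ ?_
      · exact fun x => Subgroup.mem_center_iff.mp (ker_central hgg) x
      · exact fun x => Subgroup.mem_center_iff.mp (ker_central hhh) x)
  have hsub : commutatorSet (Rack.EnvelGroup Q) ⊆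
      Set.range (fun p : (Rack.EnvelGroup Q ⧸ QdlZ0 Q) × (Rack.EnvelGroup Q ⧸ QdlZ0 Q) =>
        c p.1 p.2) := by
    rintro _ ⟨g, h, rfl⟩
    exact ⟨(QuotientGroup.mk g, QuotientGroup.mk h), rfl⟩
  have : Finite (commutatorSet (Rack.EnvelGroup Q)) :=
    ((Set.finite_range _).subset hsub).to_subtype
  infer_instance
end

section
/- Let Q be a finite quandle and Z₀ = ker θ_{G(Q)}. Let N be a subgroup of Z₀ that is torsion-free (its only element of finite order is the identity) and such that every element of Z₀ is a product of an element of N and an element of Z₀ of finite order. Then N is a normal subgroup of G(Q) and the quotient group G(Q)/N is finite. -/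
open scoped Quandles
open Rack in
lemma qdl_envel_induction {Q : Type*} [Rack Q] {p : EnvelGroup Q → Prop}
    (h1 : p 1) (hincl : ∀ x : Q, p (toEnvelGroup Q x))
    (hmul : ∀ a b, p a → p b → p (a * b)) (hinv : ∀ a, p a → p a⁻¹) :
    ∀ g, p g := fun g =>
  Quotient.inductionOn g fun a => by
    induction a with
    | unit => exact h1
    | incl x => exact hincl x
    | mul a b ia ib => exact hmul ⟦a⟧ ⟦b⟧ ia ib
    | inv a ia => exact hinv ⟦a⟧ ia

open Rack in
lemma qdl_conj_incl (Q : Type*) [Rack Q] (g : EnvelGroup Q) :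
    ∀ x : Q, g * (toEnvelGroup Q x : EnvelGroup Q) * g⁻¹ =
      toEnvelGroup Q (((QdlThetaG Q g : Equiv.Perm Q)) x) := by
  induction g using qdl_envel_induction with
  | h1 => intro x; simp
  | hincl y =>
    intro x
    have h1 : QdlThetaG Q (toEnvelGroup Q y : EnvelGroup Q) = QdlTheta Q y := rfl
    have h3 : ((QdlTheta Q y : QdlInn Q) : Equiv.Perm Q) x = y ◃ x := rfl
    have h2 := (toEnvelGroup Q).map_act' (x := y) (y := x)
    rw [Quandle.conj_act_eq_conj] at h2
    rw [h1, h3]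
    exact h2.symm
  | hmul a b iha ihb =>
    intro x
    have h1 : a * b * (toEnvelGroup Q x : EnvelGroup Q) * (a * b)⁻¹ =
        a * (b * (toEnvelGroup Q x : EnvelGroup Q) * b⁻¹) * a⁻¹ := by group
    rw [h1, ihb x, iha, map_mul]
    rfl
  | hinv a iha =>
    intro x
    rw [map_inv]
    have hcoe : (((QdlThetaG Q a)⁻¹ : QdlInn Q) : Equiv.Perm Q) =
      ((QdlThetaG Q a : Equiv.Perm Q))⁻¹ := rfl
    rw [hcoe, inv_inv]
    have h2 := iha (((QdlThetaG Q a : Equiv.Perm Q))⁻¹ x)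
    rw [show ∀ (e : Equiv.Perm Q) y, e (e⁻¹ y) = y from fun e y => e.apply_symm_apply y] at h2
    rw [← h2]
    group

open Rack in
lemma qdlZ0_le_center (Q : Type*) [Rack Q] :
    QdlZ0 Q ≤ Subgroup.center (EnvelGroup Q) := by
  intro z hz
  have hz' : QdlThetaG Q z = 1 := hz
  have key : ∀ x : Q, Commute z (toEnvelGroup Q x : EnvelGroup Q) := by
    intro x
    have h := qdl_conj_incl Q z x
    rw [hz'] at h
    simp only [OneMemClass.coe_one, Equiv.Perm.coe_one, id_eq] at h
    exact mul_inv_eq_iff_eq_mul.mp h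
  rw [Subgroup.mem_center_iff]
  intro g
  induction g using qdl_envel_induction with
  | h1 => simp
  | hincl y => exact ((key y).symm).eq
  | hmul a b iha ihb => rw [mul_assoc, ihb, ← mul_assoc, iha, mul_assoc]
  | hinv a iha =>
    have h : Commute z a := iha.symm
    exact h.inv_right.symm.eq

open Rack in
lemma qdl_mem_closure (Q : Type*) [Rack Q] (g : EnvelGroup Q) :
    g ∈ Subgroup.closure (Set.range (fun x : Q => (toEnvelGroup Q x : EnvelGroup Q))) := by
  induction g using qdl_envel_induction with
  | h1 => exact one_mem _
  | hincl y => exact Subgroup.subset_closure ⟨y, rfl⟩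
  | hmul a b iha ihb => exact mul_mem iha ihb
  | hinv a iha => exact inv_mem iha

open Rack in
lemma qdl_fg (Q : Type*) [Rack Q] [Finite Q] : Group.FG (EnvelGroup Q) := by
  rw [Group.fg_iff]
  exact ⟨Set.range (fun x : Q => (toEnvelGroup Q x : EnvelGroup Q)),
    eq_top_iff.mpr (fun g _ => qdl_mem_closure Q g), Set.finite_range _⟩

open Rack in
lemma qdl_finite_quot_Z0 (Q : Type*) [Rack Q] [Finite Q] :
    Finite (EnvelGroup Q ⧸ QdlZ0 Q) := by
  haveI : Finite ↥(QdlInn Q) := Subtype.finite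
  exact Finite.of_equiv ↥(QdlThetaG Q).range
    (QuotientGroup.quotientKerEquivRange (QdlThetaG Q)).symm.toEquiv

/-- if `N ≤ Z₀` is torsion-free and every element of `Z₀` is a product of an
element of `N` and a finite-order element of `Z₀`, then `N` is normal in `G(Q)` and the
quotient `G(Q)/N` is finite. -/
theorem stmt14 (Q : Type*) [Quandle Q] [Finite Q] (N : Subgroup (Rack.EnvelGroup Q))
    (hNZ : N ≤ QdlZ0 Q)
    (htf : ∀ n ∈ N, IsOfFinOrder n → n = 1)
    (hdecomp : ∀ z ∈ QdlZ0 Q, ∃ n ∈ N, ∃ t ∈ QdlZ0 Q, IsOfFinOrder t ∧ z = n * t) :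
    N.Normal ∧ Finite (Rack.EnvelGroup Q ⧸ N) := by
  have hcent := qdlZ0_le_center Q
  have hNc : N ≤ Subgroup.center (Rack.EnvelGroup Q) := hNZ.trans hcent
  have hnormal : N.Normal := by
    refine ⟨fun n hn g => ?_⟩
    rw [Subgroup.mem_center_iff.mp (hNc hn) g, mul_assoc, mul_inv_cancel, mul_one]
    exact hn
  refine ⟨hnormal, ?_⟩
  haveI := qdl_finite_quot_Z0 Q
  haveI : (QdlZ0 Q).FiniteIndex := Subgroup.finiteIndex_of_finite_quotient
  haveI : Group.FG (Rack.EnvelGroup Q) := qdl_fg Q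
  haveI : Group.FG (QdlZ0 Q) := Subgroup.fg_of_index_ne_zero _
  letI : CommGroup (QdlZ0 Q) :=
    { (inferInstance : Group (QdlZ0 Q)) with
      mul_comm := fun a b =>
        Subtype.ext (Subgroup.mem_center_iff.mp (hcent b.2) ↑a) }
  set N' := N.subgroupOf (QdlZ0 Q) with hN'
  haveI : N'.Normal := ⟨fun n hn g => by
    rw [mul_comm g n, mul_assoc, mul_inv_cancel, mul_one]; exact hn⟩
  haveI : Group.FG ((QdlZ0 Q) ⧸ N') :=
    Group.fg_of_surjective (QuotientGroup.mk'_surjective N')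
  have htor : Monoid.IsTorsion ((QdlZ0 Q) ⧸ N') := by
    intro q
    obtain ⟨z, rfl⟩ := QuotientGroup.mk'_surjective N' q
    obtain ⟨n, hn, t, htZ, htfin, heq⟩ := hdecomp ↑z z.2
    set tz : QdlZ0 Q := ⟨t, htZ⟩ with htz
    have hzeq : z = ⟨n, hNZ hn⟩ * tz := Subtype.ext heq
    have h1 : QuotientGroup.mk' N' z = QuotientGroup.mk' N' tz := by
      rw [hzeq, map_mul]
      have hone : QuotientGroup.mk' N' ⟨n, hNZ hn⟩ = 1 := by
        rw [QuotientGroup.mk'_apply, QuotientGroup.eq_one_iff]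
        exact hn
      rw [hone, one_mul]
    rw [h1]
    have htfin' : IsOfFinOrder tz := by
      obtain ⟨k, hk, hpow⟩ := (isOfFinOrder_iff_pow_eq_one).mp htfin
      exact (isOfFinOrder_iff_pow_eq_one).mpr ⟨k, hk, Subtype.ext (by
        push_cast
        exact hpow)⟩
    exact (QuotientGroup.mk' N').isOfFinOrder htfin'
  haveI : Finite ((QdlZ0 Q) ⧸ N') := CommGroup.finite_of_fg_torsion _ htor
  haveI : N'.FiniteIndex := Subgroup.finiteIndex_of_finite_quotient
  have hrel : N.relIndex (QdlZ0 Q) ≠ 0 := Subgroup.FiniteIndex.index_ne_zero (H := N')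
  have hidx : N.index ≠ 0 := by
    rw [← Subgroup.relIndex_mul_index hNZ]
    exact mul_ne_zero hrel ((Subgroup.FiniteIndex.index_ne_zero (H := QdlZ0 Q)))
  haveI : N.FiniteIndex := ⟨hidx⟩
  exact Subgroup.finite_quotient_of_finiteIndex
end
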